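/- Let u : ℤ × ℂ → ℂ (written u(n,t), smooth in t) and let L = T + Σ_{s=0}^{∞} w_s T^{−s} be a formal pseudo-difference operator in the shift T with t-dependent coefficients, satisfying [∂_t − T + u, L] = 0. Write L^m = L^m_+ + L^m_− where L^m_+ contains only strictly positive powers of T and L^m_− = F_m + F_m^1 T^{−1} + F_m^2 T^{−2} + O(T^{−3}). Then [∂_t − T + u, L^m_+] = (Δ F_m)·T where (Δ F_m)(n) = F_m(n+1) − F_m(n); moreover Δ F_m^1 = ∂_t F_m, and Δ F_m^2 = ∂_t F_m^1 + u·F_m^1 − F_m^1(·−1)·u(·−1) (with the appropriate shift convention). -/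

import Mathlib

namespace Stmt10

/-- Coefficient of `T^s` in the product of two pseudo-difference operators with
`t`-dependent coefficients and order bounds `N₁`, `N₂`. -/
noncomputable def pdoMulCoeff (N₁ N₂ : ℤ) (a b : ℤ → ℤ → ℂ → ℂ) (s n : ℤ) (t : ℂ) : ℂ :=
  ∑ i ∈ Finset.Icc (s - N₂) N₁, a i n t * b (s - i) (n + i) t

/-- Coefficients of `L = T + Σ_{s≥0} w_s T^{−s}`. -/
noncomputable def Lcoeff (w : ℕ → ℤ → ℂ → ℂ) : ℤ → ℤ → ℂ → ℂ :=
  fun s n t => if s = 1 then 1 else if s ≤ 0 then w (-s).toNat n t else 0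

/-- Coefficients of `L^m` (`L` has order `1`, `L^m` has order `m`). -/
noncomputable def Lpow (w : ℕ → ℤ → ℂ → ℂ) : ℕ → ℤ → ℤ → ℂ → ℂ
  | 0 => fun s _ _ => if s = 0 then 1 else 0
  | m + 1 => pdoMulCoeff 1 (m : ℤ) (Lcoeff w) (Lpow w m)

/-- Coefficient of `T^s` in the commutator `[∂_t − T + u, D]` for a pseudo-difference
operator `D` with coefficients `a`. -/
noncomputable def bracketCoeff (u : ℤ → ℂ → ℂ) (a : ℤ → ℤ → ℂ → ℂ) (s n : ℤ) (t : ℂ) : ℂ :=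
  deriv (a s n) t - a (s - 1) (n + 1) t + a (s - 1) n t
    + u n t * a s n t - a s n t * u (n + s) t

/-- Strictly positive difference part `D_+` of a pseudo-difference operator. -/
noncomputable def posPart (a : ℤ → ℤ → ℂ → ℂ) : ℤ → ℤ → ℂ → ℂ :=
  fun s n t => if 1 ≤ s then a s n t else 0

/-! ### Auxiliary lemmas -/

/-- Telescoping/boundary identity for sums over integer intervals. -/
lemma tele (L U : ℤ) (f g h : ℤ → ℂ) (hfU : f U = g U) (hgL : g L = h L) :
    ∑ i ∈ Finset.Icc L U, (h i - f i)
      = (∑ i ∈ Finset.Icc L (U - 1), (g i - f i))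
        + ∑ i ∈ Finset.Icc (L + 1) U, (h i - g i) := by
  rcases le_or_gt L U with hLU | hLU
  · have hIco : Finset.Icc L (U - 1) = Finset.Ico L U := by
      ext x; simp only [Finset.mem_Icc, Finset.mem_Ico]; omega
    have hIoc : Finset.Icc (L + 1) U = Finset.Ioc L U := by
      ext x; simp only [Finset.mem_Icc, Finset.mem_Ioc]; omega
    have h1 : Finset.Icc L U = insert U (Finset.Ico L U) := (Finset.Ico_insert_right hLU).symm
    have h2 : Finset.Icc L U = insert L (Finset.Ioc L U) := (Finset.Ioc_insert_left hLU).symm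
    have eIcc1 : ∀ F : ℤ → ℂ, ∑ i ∈ Finset.Icc L U, F i = (∑ i ∈ Finset.Ico L U, F i) + F U := by
      intro F; rw [h1, Finset.sum_insert (by simp)]; ring
    have eIcc2 : ∀ F : ℤ → ℂ, ∑ i ∈ Finset.Icc L U, F i = (∑ i ∈ Finset.Ioc L U, F i) + F L := by
      intro F; rw [h2, Finset.sum_insert (by simp)]; ring
    rw [hIco, hIoc]
    have A := eIcc1 (fun i => h i - f i)
    have C1 := eIcc1 (fun i => h i - g i)
    have C2 := eIcc2 (fun i => h i - g i)
    have D : ∑ i ∈ Finset.Ico L U, (h i - f i)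
        = (∑ i ∈ Finset.Ico L U, (g i - f i)) + ∑ i ∈ Finset.Ico L U, (h i - g i) := by
      rw [← Finset.sum_add_distrib]; exact Finset.sum_congr rfl fun i _ => by ring
    linear_combination A + D + C2 - C1 - hfU - hgL
  · rw [Finset.Icc_eq_empty (by omega), Finset.Icc_eq_empty (by omega),
      Finset.Icc_eq_empty (by omega)]
    simp

lemma deriv_sum_mul (S : Finset ℤ) (F G : ℤ → ℂ → ℂ)
    (hF : ∀ i, Differentiable ℂ (F i)) (hG : ∀ i, Differentiable ℂ (G i)) (t : ℂ) :
    deriv (fun t => ∑ i ∈ S, F i t * G i t) t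
      = ∑ i ∈ S, (deriv (F i) t * G i t + F i t * deriv (G i) t) := by
  have h : HasDerivAt (fun t => ∑ i ∈ S, F i t * G i t)
      (∑ i ∈ S, (deriv (F i) t * G i t + F i t * deriv (G i) t)) t := by
    refine HasDerivAt.fun_sum fun i _ => ?_
    exact ((hF i).differentiableAt.hasDerivAt.mul (hG i).differentiableAt.hasDerivAt)
  exact h.deriv

/-- The commutator with `∂_t − T + u` is a derivation of the (truncated) product,
provided the two leading coefficients are constant in `n`. -/
lemma bracket_mul (u : ℤ → ℂ → ℂ) (N₁ N₂ : ℤ) (a b : ℤ → ℤ → ℂ → ℂ)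
    (hda : ∀ i n, Differentiable ℂ (a i n)) (hdb : ∀ j n, Differentiable ℂ (b j n))
    (ha1 : ∀ n t, a N₁ (n + 1) t = a N₁ n t)
    (hb1 : ∀ n t, b N₂ (n + 1) t = b N₂ n t)
    (s n : ℤ) (t : ℂ) :
    bracketCoeff u (pdoMulCoeff N₁ N₂ a b) s n t
      = ∑ i ∈ Finset.Icc (s - N₂) N₁,
          (bracketCoeff u a i n t * b (s - i) (n + i) t
            + a i n t * bracketCoeff u b (s - i) (n + i) t) := by
  have hD : deriv (pdoMulCoeff N₁ N₂ a b s n) t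
      = ∑ i ∈ Finset.Icc (s - N₂) N₁,
          (deriv (a i n) t * b (s - i) (n + i) t + a i n t * deriv (b (s - i) (n + i)) t) := by
    have hrfl : pdoMulCoeff N₁ N₂ a b s n
        = fun t => ∑ i ∈ Finset.Icc (s - N₂) N₁, a i n t * b (s - i) (n + i) t := rfl
    rw [hrfl]
    exact deriv_sum_mul _ _ _ (fun i => hda i n) (fun i => hdb (s - i) (n + i)) t
  have key : ∑ i ∈ Finset.Icc (s - N₂) N₁,
          (bracketCoeff u a i n t * b (s - i) (n + i) t
            + a i n t * bracketCoeff u b (s - i) (n + i) t)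
      = (∑ i ∈ Finset.Icc (s - N₂) N₁,
          (deriv (a i n) t * b (s - i) (n + i) t + a i n t * deriv (b (s - i) (n + i)) t))
        + (u n t * ∑ i ∈ Finset.Icc (s - N₂) N₁, a i n t * b (s - i) (n + i) t
          - (∑ i ∈ Finset.Icc (s - N₂) N₁, a i n t * b (s - i) (n + i) t) * u (n + s) t)
        + ((∑ i ∈ Finset.Icc (s - N₂) N₁,
              (a (i - 1) n t * b (s - i) (n + i) t - a (i - 1) (n + 1) t * b (s - i) (n + i) t))
          + ∑ i ∈ Finset.Icc (s - N₂) N₁,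
              (a i n t * b (s - 1 - i) (n + i) t - a i n t * b (s - 1 - i) (n + i + 1) t)) := by
    rw [Finset.mul_sum, Finset.sum_mul, ← Finset.sum_sub_distrib, ← Finset.sum_add_distrib,
      ← Finset.sum_add_distrib, ← Finset.sum_add_distrib]
    refine Finset.sum_congr rfl fun i _ => ?_
    simp only [bracketCoeff]
    rw [show n + i + (s - i) = n + s from by ring, show s - i - 1 = s - 1 - i from by ring]
    ring
  rw [key]
  simp only [bracketCoeff]
  rw [hD]
  simp only [pdoMulCoeff]
  simp only [show ∀ i : ℤ, n + 1 + i = n + i + 1 from fun i => by ring]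
  have hre : (∑ i ∈ Finset.Icc (s - N₂) N₁,
        (a (i - 1) n t * b (s - i) (n + i) t - a (i - 1) (n + 1) t * b (s - i) (n + i) t))
      = ∑ i ∈ Finset.Icc (s - 1 - N₂) (N₁ - 1),
          (a i n t * b (s - 1 - i) (n + i + 1) t - a i (n + 1) t * b (s - 1 - i) (n + i + 1) t) := by
    rw [show Finset.Icc (s - N₂) N₁ = (Finset.Icc (s - 1 - N₂) (N₁ - 1)).map (addRightEmbedding 1)
        from by rw [Finset.map_add_right_Icc]; congr 1 <;> ring]
    rw [Finset.sum_map]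
    refine Finset.sum_congr rfl fun i _ => ?_
    simp only [addRightEmbedding_apply]
    rw [show i + 1 - 1 = i from by ring, show s - (i + 1) = s - 1 - i from by ring,
      show n + (i + 1) = n + i + 1 from by ring]
  rw [hre]
  have teleH := tele (s - 1 - N₂) N₁
      (fun i => a i (n + 1) t * b (s - 1 - i) (n + i + 1) t)
      (fun i => a i n t * b (s - 1 - i) (n + i + 1) t)
      (fun i => a i n t * b (s - 1 - i) (n + i) t)
      (by rw [ha1])
      (by rw [show s - 1 - (s - 1 - N₂) = N₂ from by ring, hb1])
  rw [show s - 1 - N₂ + 1 = s - N₂ from by ring] at teleH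
  have hsplit : ∑ i ∈ Finset.Icc (s - 1 - N₂) N₁,
        (a i n t * b (s - 1 - i) (n + i) t - a i (n + 1) t * b (s - 1 - i) (n + i + 1) t)
      = (∑ i ∈ Finset.Icc (s - 1 - N₂) N₁, a i n t * b (s - 1 - i) (n + i) t)
        - ∑ i ∈ Finset.Icc (s - 1 - N₂) N₁, a i (n + 1) t * b (s - 1 - i) (n + i + 1) t :=
    Finset.sum_sub_distrib _ _
  linear_combination teleH - hsplit

lemma Lcoeff_diff (w : ℕ → ℤ → ℂ → ℂ) (hw : ∀ (i : ℕ) (n : ℤ), Differentiable ℂ (w i n)) :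
    ∀ (s n : ℤ), Differentiable ℂ (Lcoeff w s n) := by
  intro s n
  have hrfl : Lcoeff w s n
      = fun t => if s = 1 then (1 : ℂ) else if s ≤ 0 then w (-s).toNat n t else 0 := rfl
  rw [hrfl]
  by_cases h1 : s = 1
  · simp only [if_pos h1]; exact differentiable_const _
  · by_cases h0 : s ≤ 0
    · simp only [if_neg h1, if_pos h0]; exact hw _ n
    · simp only [if_neg h1, if_neg h0]; exact differentiable_const _

lemma Lpow_diff (w : ℕ → ℤ → ℂ → ℂ) (hw : ∀ (i : ℕ) (n : ℤ), Differentiable ℂ (w i n)) :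
    ∀ (m : ℕ) (s n : ℤ), Differentiable ℂ (Lpow w m s n) := by
  intro m
  induction m with
  | zero =>
    intro s n
    have hrfl : Lpow w 0 s n = fun _ : ℂ => if s = 0 then (1 : ℂ) else 0 := rfl
    rw [hrfl]
    by_cases h : s = 0
    · simp only [if_pos h]; exact differentiable_const _
    · simp only [if_neg h]; exact differentiable_const _
  | succ m ih =>
    intro s n
    have hrfl : Lpow w (m + 1) s n
        = fun t => ∑ i ∈ Finset.Icc (s - (m : ℤ)) 1, Lcoeff w i n t * Lpow w m (s - i) (n + i) t :=
      rfl
    rw [hrfl]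
    exact Differentiable.fun_sum fun i _ => (Lcoeff_diff w hw i n).mul (ih (s - i) (n + i))

lemma Lpow_lead (w : ℕ → ℤ → ℂ → ℂ) :
    ∀ (m : ℕ) (n : ℤ) (t : ℂ), Lpow w m (m : ℤ) n t = 1 := by
  intro m
  induction m with
  | zero => intro n t; simp [Lpow]
  | succ m ih =>
    intro n t
    show pdoMulCoeff 1 (m : ℤ) (Lcoeff w) (Lpow w m) ((m + 1 : ℕ) : ℤ) n t = 1
    unfold pdoMulCoeff
    rw [show ((m + 1 : ℕ) : ℤ) - (m : ℤ) = 1 from by push_cast; ring, Finset.Icc_self,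
      Finset.sum_singleton,
      show ((m + 1 : ℕ) : ℤ) - 1 = (m : ℤ) from by push_cast; ring, ih]
    simp [Lcoeff]

lemma bracket_Lpow (w : ℕ → ℤ → ℂ → ℂ) (u : ℤ → ℂ → ℂ)
    (hw : ∀ (i : ℕ) (n : ℤ), Differentiable ℂ (w i n))
    (hLax : ∀ (s n : ℤ) (t : ℂ), bracketCoeff u (Lcoeff w) s n t = 0) :
    ∀ (m : ℕ) (s n : ℤ) (t : ℂ), bracketCoeff u (Lpow w m) s n t = 0 := by
  intro m
  induction m with
  | zero =>
    intro s n t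
    have h0 : ∀ (s' n' : ℤ), Lpow w 0 s' n' = fun _ : ℂ => if s' = 0 then (1 : ℂ) else 0 :=
      fun _ _ => rfl
    simp only [bracketCoeff, h0]
    rw [deriv_const]
    by_cases hs : s = 0
    · subst hs; norm_num
    · simp [hs]
  | succ m ih =>
    intro s n t
    have hmul := bracket_mul u 1 (m : ℤ) (Lcoeff w) (Lpow w m)
      (Lcoeff_diff w hw) (fun j nn => Lpow_diff w hw m j nn)
      (fun nn tt => by simp [Lcoeff])
      (fun nn tt => by rw [Lpow_lead, Lpow_lead]) s n t
    have hLp : Lpow w (m + 1) = pdoMulCoeff 1 (m : ℤ) (Lcoeff w) (Lpow w m) := rfl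
    rw [hLp, hmul]
    refine Finset.sum_eq_zero fun i _ => ?_
    rw [hLax, ih]
    ring

theorem stmt10 (w : ℕ → ℤ → ℂ → ℂ) (u : ℤ → ℂ → ℂ)
    (hw : ∀ (i : ℕ) (n : ℤ), Differentiable ℂ (w i n))
    (hu : ∀ n : ℤ, Differentiable ℂ (u n))
    (hLax : ∀ (s n : ℤ) (t : ℂ), bracketCoeff u (Lcoeff w) s n t = 0) (m : ℕ) :
    (∀ (s n : ℤ) (t : ℂ),
      bracketCoeff u (posPart (Lpow w m)) s n t
        = if s = 1 then Lpow w m 0 (n + 1) t - Lpow w m 0 n t else 0) ∧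
    (∀ (n : ℤ) (t : ℂ),
      Lpow w m (-1) (n + 1) t - Lpow w m (-1) n t = deriv (Lpow w m 0 n) t) ∧
    (∀ (n : ℤ) (t : ℂ),
      Lpow w m (-2) (n + 1) t - Lpow w m (-2) n t
        = deriv (Lpow w m (-1) n) t + u n t * Lpow w m (-1) n t
          - Lpow w m (-1) n t * u (n - 1) t) := by
  have hbrL := bracket_Lpow w u hw hLax m
  refine ⟨?_, ?_, ?_⟩
  · intro s n t
    have hbr := hbrL s n t
    simp only [bracketCoeff] at hbr
    have hpos : ∀ (s' n' : ℤ), 1 ≤ s' → posPart (Lpow w m) s' n' = Lpow w m s' n' :=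
      fun s' n' h => funext fun _ => if_pos h
    have hpos0 : ∀ (s' n' : ℤ), ¬ 1 ≤ s' → posPart (Lpow w m) s' n' = fun _ => (0 : ℂ) :=
      fun s' n' h => funext fun _ => if_neg h
    by_cases hs1 : s = 1
    · subst hs1
      simp only [bracketCoeff, posPart]
      rw [hpos 1 n le_rfl]
      norm_num
      norm_num at hbr
      linear_combination hbr
    · by_cases hs : 1 ≤ s
      · simp only [bracketCoeff, posPart, if_pos hs,
          if_pos (show (1 : ℤ) ≤ s - 1 from by omega)]
        rw [hpos s n hs, if_neg hs1]
        linear_combination hbr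
      · simp only [bracketCoeff, posPart, if_neg hs,
          if_neg (show ¬ (1 : ℤ) ≤ s - 1 from by omega)]
        rw [hpos0 s n hs, if_neg hs1]
        simp
  · intro n t
    have hbr := hbrL 0 n t
    simp only [bracketCoeff] at hbr
    norm_num at hbr
    linear_combination -hbr
  · intro n t
    have hbr := hbrL (-1) n t
    simp only [bracketCoeff] at hbr
    rw [show (-1 : ℤ) - 1 = -2 from by norm_num, show n + (-1 : ℤ) = n - 1 from by ring] at hbr
    linear_combination -hbr

end Stmt10
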